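/- Let G be a brick or brace of perfect matching width 2 and let (T, δ) be a PM-decomposition of G of width 2. Then the spine of T is cubic (every vertex of the spine has degree 1 or 3 in the spine). -/

import Mathlib

open SimpleGraph

/-- A graph is matching covered if it is connected and every edge lies in a
perfect matching. -/
def MatchingCovered {V : Type*} (G : SimpleGraph V) : Prop :=
  G.Connected ∧ ∀ e ∈ G.edgeSet, ∃ M : G.Subgraph, M.IsPerfectMatching ∧ e ∈ M.edgeSet

/-- The edge cut `∂(X)`: all edges of `G` with exactly one endpoint in `X`. -/
def cutEdges {V : Type*} (G : SimpleGraph V) (X : Set V) : Set (Sym2 V) :=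
  {e | e ∈ G.edgeSet ∧ ∃ u v, e = s(u, v) ∧ u ∈ X ∧ v ∉ X}

/-- The matching porosity of the cut `∂(X)`: the maximum number of edges of a
perfect matching of `G` crossing the cut. -/
noncomputable def matchingPorosity {V : Type*} (G : SimpleGraph V) (X : Set V) : ℕ :=
  sSup {n | ∃ M : G.Subgraph, M.IsPerfectMatching ∧ n = (M.edgeSet ∩ cutEdges G X).ncard}

/-- A cut is tight if every perfect matching contains exactly one of its edges. -/
def IsTightCut {V : Type*} (G : SimpleGraph V) (X : Set V) : Prop :=
  ∀ M : G.Subgraph, M.IsPerfectMatching → (M.edgeSet ∩ cutEdges G X).ncard = 1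

/-- A tight cut is non-trivial if both shores have at least two vertices. -/
def IsNontrivialTightCut {V : Type*} (G : SimpleGraph V) (X : Set V) : Prop :=
  IsTightCut G X ∧ 2 ≤ X.ncard ∧ 2 ≤ Xᶜ.ncard

/-- `A`, `B` form a bipartition of `G` into its two colour classes. -/
def IsBipartitionOf {V : Type*} (G : SimpleGraph V) (A B : Set V) : Prop :=
  A ∪ B = Set.univ ∧ Disjoint A B ∧
    ∀ ⦃u v⦄, G.Adj u v → (u ∈ A ∧ v ∈ B) ∨ (u ∈ B ∧ v ∈ A)

/-- A brace with colour classes `A` and `B`: a bipartite matching covered graph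
without non-trivial tight cuts. -/
def IsBraceWith {V : Type*} (G : SimpleGraph V) (A B : Set V) : Prop :=
  MatchingCovered G ∧ IsBipartitionOf G A B ∧ ∀ X : Set V, ¬ IsNontrivialTightCut G X

/-- The degree of a vertex, as the cardinality of its neighbour set. -/
noncomputable def ndeg {W : Type*} (T : SimpleGraph W) (v : W) : ℕ :=
  (T.neighborSet v).ncard

/-- A cubic tree: a tree all of whose vertices have degree 1 or 3. -/
def IsCubicTree {W : Type*} (T : SimpleGraph W) : Prop :=
  T.IsTree ∧ ∀ v, ndeg T v = 1 ∨ ndeg T v = 3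

/-- The shore of the cut induced by the tree edge `t₁t₂`: all vertices of the
graph mapped by `δ` to leaves of the component of `T - t₁t₂` containing `t₁`. -/
def treeShore {U W : Type*} (T : SimpleGraph W) (δ : U → W) (t₁ t₂ : W) : Set U :=
  {v | (T.deleteEdges {s(t₁, t₂)}).Reachable (δ v) t₁}

/-- The set of leaves of `T` contained in the component of `T - t₁t₂`
containing `t₁`. -/
def sideLeaves {W : Type*} (T : SimpleGraph W) (t₁ t₂ : W) : Set W :=
  {t | ndeg T t = 1 ∧ (T.deleteEdges {s(t₁, t₂)}).Reachable t t₁}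

/-- An odd edge of a cubic tree: an edge of the spine (neither endpoint is a
leaf) such that each of the two components of `T - e` contains an odd number of
leaves of `T`. -/
def IsOddEdge {W : Type*} (T : SimpleGraph W) (t₁ t₂ : W) : Prop :=
  T.Adj t₁ t₂ ∧ ndeg T t₁ ≠ 1 ∧ ndeg T t₂ ≠ 1 ∧
    Odd (sideLeaves T t₁ t₂).ncard ∧ Odd (sideLeaves T t₂ t₁).ncard

/-- The degree of a vertex within the spine of `T` (the tree `T` minus its
leaves): the number of its non-leaf neighbours. -/
noncomputable def spineDeg {W : Type*} (T : SimpleGraph W) (t : W) : ℕ :=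
  {t' | T.Adj t t' ∧ ndeg T t' ≠ 1}.ncard

/-- `(T, δ)` is a perfect matching decomposition of `G`: `T` is a cubic tree
and `δ` is a bijection between the leaves of `T` and the vertices of `G`. -/
def IsPMDecomp {V : Type*} (G : SimpleGraph V) {n : ℕ} (T : SimpleGraph (Fin n))
    (δ : V → Fin n) : Prop :=
  IsCubicTree T ∧ Function.Injective δ ∧ (∀ v, ndeg T (δ v) = 1) ∧
    ∀ t, ndeg T t = 1 → ∃ v, δ v = t

/-- The width of a PM-decomposition: the maximum matching porosity of a cut
induced by an edge of the tree. -/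
noncomputable def decompWidth {V : Type*} (G : SimpleGraph V) {n : ℕ}
    (T : SimpleGraph (Fin n)) (δ : V → Fin n) : ℕ :=
  sSup {k | ∃ t₁ t₂, T.Adj t₁ t₂ ∧ k = matchingPorosity G (treeShore T δ t₁ t₂)}

/-- The perfect matching width of `G`: the minimum width of a perfect matching
decomposition of `G`. -/
noncomputable def pmw {V : Type*} (G : SimpleGraph V) : ℕ :=
  sInf {k | ∃ (n : ℕ) (T : SimpleGraph (Fin n)) (δ : V → Fin n),
    IsPMDecomp G T δ ∧ decompWidth G T δ = k}

/-- A brick or a brace: a matching covered graph without non-trivial tight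
cuts (braces are the bipartite ones, bricks the non-bipartite ones). -/
def IsBrickOrBrace {V : Type*} (G : SimpleGraph V) : Prop :=
  MatchingCovered G ∧ ∀ X : Set V, ¬ IsNontrivialTightCut G X

section Helpers

open SimpleGraph Walk

variable {W : Type*}

lemma tree_not_reachable_delete {T : SimpleGraph W} (hT : T.IsAcyclic) {t₁ t₂ : W}
    (h : T.Adj t₁ t₂) : ¬ (T.deleteEdges {s(t₁, t₂)}).Reachable t₁ t₂ := by
  have hb := isAcyclic_iff_forall_edge_isBridge.mp hT (show s(t₁, t₂) ∈ T.edgeSet from h)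
  rw [isBridge_iff] at hb
  exact hb

lemma not_mem_support_of_not_reachable [DecidableEq W] {H : SimpleGraph W} {x y c : W} (p : H.Walk x y)
    (hc : ¬ H.Reachable c y) : c ∉ p.support := fun h => hc ⟨p.dropUntil c h⟩

lemma reachable_delete_of_walk_avoid {T H : SimpleGraph W} {e₂ : Sym2 W}
    (hle : H ≤ T) {x y : W} (p : H.Walk x y) (h : ∀ f ∈ p.edges, f ≠ e₂) :
    (T.deleteEdges {e₂}).Reachable x y := by
  refine ⟨p.transfer _ fun f hf => ?_⟩
  have hfT : f ∈ T.edgeSet := (SimpleGraph.edgeSet_mono hle) (p.edges_subset_edgeSet hf)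
  rw [edgeSet_deleteEdges]
  exact ⟨hfT, by simpa using h f hf⟩

lemma path_length_eq_dist [DecidableEq W] {T : SimpleGraph W} (hT : T.IsTree) {u v : W}
    {p : T.Walk u v} (hp : p.IsPath) : p.length = T.dist u v := by
  obtain ⟨q, hq⟩ := hT.isConnected.exists_walk_length_eq_dist u v
  refine le_antisymm ?_ (SimpleGraph.dist_le p)
  have hb : q.bypass.IsPath := q.bypass_isPath
  have heq := (hT.existsUnique_path u v).unique hp hb
  rw [heq]
  exact le_trans (Walk.length_bypass_le q) (le_of_eq hq)

lemma dist_eq_one_of_adj' {T : SimpleGraph W} {u v : W} (h : T.Adj u v) : T.dist u v = 1 := by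
  refine le_antisymm ?_ (h.reachable.pos_dist_of_ne h.ne)
  simpa using SimpleGraph.dist_le (Walk.cons h Walk.nil)

lemma exists_leaf_side [Fintype W] [DecidableEq W] {T : SimpleGraph W}
    (hTree : T.IsTree) (hcub : ∀ v, ndeg T v = 1 ∨ ndeg T v = 3) {a t : W} (h : T.Adj a t) :
    ∃ ℓ, ndeg T ℓ = 1 ∧ (T.deleteEdges {s(a, t)}).Reachable ℓ a := by
  classical
  set T' := T.deleteEdges {s(a, t)} with hT'
  have hnr : ¬ T'.Reachable a t := tree_not_reachable_delete hTree.IsAcyclic h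
  set C : Finset W := Finset.univ.filter (fun x => T'.Reachable x a) with hC
  have haC : a ∈ C := by
    simp only [hC, Finset.mem_filter, Finset.mem_univ, true_and]
    exact Reachable.refl a
  obtain ⟨ℓ, hℓC, hmax⟩ := C.exists_max_image (fun x => T.dist t x) ⟨a, haC⟩
  have hℓa : T'.Reachable ℓ a := by simpa [hC] using hℓC
  refine ⟨ℓ, ?_, hℓa⟩
  by_contra hne
  have hdeg : ndeg T ℓ = 3 := (hcub ℓ).resolve_left hne
  have htC : t ∉ C := by
    simp only [hC, Finset.mem_filter, Finset.mem_univ, true_and]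
    exact fun hr => hnr hr.symm
  have hℓt : ℓ ≠ t := fun hh => htC (hh ▸ hℓC)
  set d := T.dist t ℓ with hd
  have key : ∀ z, T.Adj ℓ z → T.dist t z ≠ d + 1 →
      ∃ p : T.Walk ℓ t, p.IsPath ∧ p.getVert 1 = z := by
    intro z hz hdz
    obtain ⟨P, hP⟩ := (hTree.existsUnique_path t z).exists
    by_cases hmem : ℓ ∈ P.support
    · exfalso
      apply hdz
      have h1 : (P.takeUntil ℓ hmem).length = d := path_length_eq_dist hTree (hP.takeUntil hmem)
      have h2 : (P.dropUntil ℓ hmem).length = 1 := by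
        rw [path_length_eq_dist hTree (hP.dropUntil hmem)]
        exact dist_eq_one_of_adj' hz
      have h3 : P.length = d + 1 := by
        conv_lhs => rw [← P.take_spec hmem]
        rw [Walk.length_append, h1, h2]
      rw [← path_length_eq_dist hTree hP, h3]
    · refine ⟨Walk.cons hz P.reverse, ?_, ?_⟩
      · exact (hP.reverse).cons (by simpa [Walk.support_reverse] using hmem)
      · rw [Walk.getVert_cons_succ, Walk.getVert_zero]
  have h2' : 1 < (T.neighborSet ℓ).ncard := by
    have : (T.neighborSet ℓ).ncard = 3 := hdeg
    omega
  obtain ⟨z₁, hz₁, z₂, hz₂, hne12⟩ := (Set.one_lt_ncard (Set.toFinite _)).mp h2'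
  have hz : ∃ z, T.Adj ℓ z ∧ T.dist t z = d + 1 := by
    by_contra hcon
    push_neg at hcon
    obtain ⟨p₁, hp₁, hg₁⟩ := key z₁ hz₁ (hcon z₁ hz₁)
    obtain ⟨p₂, hp₂, hg₂⟩ := key z₂ hz₂ (hcon z₂ hz₂)
    have := (hTree.existsUnique_path ℓ t).unique hp₁ hp₂
    exact hne12 (by rw [← hg₁, ← hg₂, this])
  obtain ⟨z, hzadj, hzd⟩ := hz
  have hzt : z ≠ t := by
    rintro rfl
    rw [SimpleGraph.dist_self] at hzd
    omega
  have hT'adj : T'.Adj ℓ z := by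
    rw [hT', SimpleGraph.deleteEdges_adj]
    refine ⟨hzadj, ?_⟩
    simp only [Set.mem_singleton_iff, Sym2.eq_iff]
    rintro (⟨rfl, rfl⟩ | ⟨rfl, rfl⟩)
    · exact hzt rfl
    · exact hℓt rfl
  have hzC : z ∈ C := by
    simp only [hC, Finset.mem_filter, Finset.mem_univ, true_and]
    exact (hT'adj.symm.reachable).trans hℓa
  have := hmax z hzC
  omega

lemma exists_two_leaves_side [Fintype W] [DecidableEq W] {T : SimpleGraph W}
    (hTree : T.IsTree) (hcub : ∀ v, ndeg T v = 1 ∨ ndeg T v = 3) {a t : W}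
    (h : T.Adj a t) (ha : ndeg T a ≠ 1) :
    ∃ ℓ₁ ℓ₂, ℓ₁ ≠ ℓ₂ ∧ ndeg T ℓ₁ = 1 ∧ ndeg T ℓ₂ = 1 ∧
      (T.deleteEdges {s(a, t)}).Reachable ℓ₁ a ∧ (T.deleteEdges {s(a, t)}).Reachable ℓ₂ a := by
  classical
  have hdeg : (T.neighborSet a).ncard = 3 := (hcub a).resolve_left ha
  have htmem : t ∈ T.neighborSet a := h
  have hcard : (T.neighborSet a \ {t}).ncard = 2 := by
    rw [Set.ncard_diff_singleton_of_mem htmem, hdeg]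
  obtain ⟨x, y, hxy, hset⟩ := Set.ncard_eq_two.mp hcard
  have hx : x ∈ T.neighborSet a \ {t} := by rw [hset]; exact Set.mem_insert _ _
  have hy : y ∈ T.neighborSet a \ {t} := by rw [hset]; right; rfl
  have hax : T.Adj a x := hx.1
  have hxt : x ≠ t := hx.2
  have hay : T.Adj a y := hy.1
  have hyt : y ≠ t := hy.2
  -- leaves on the sides of x and y
  obtain ⟨ℓ₁, hl₁, hr₁⟩ := exists_leaf_side hTree hcub hax.symm
  obtain ⟨ℓ₂, hl₂, hr₂⟩ := exists_leaf_side hTree hcub hay.symm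
  obtain ⟨p₁⟩ := hr₁
  obtain ⟨p₂⟩ := hr₂
  have hnrx : ¬ (T.deleteEdges {s(x, a)}).Reachable x a :=
    tree_not_reachable_delete hTree.IsAcyclic hax.symm
  have hnry : ¬ (T.deleteEdges {s(y, a)}).Reachable y a :=
    tree_not_reachable_delete hTree.IsAcyclic hay.symm
  have hasup₁ : a ∉ p₁.support :=
    not_mem_support_of_not_reachable p₁ (fun r => hnrx r.symm)
  have hasup₂ : a ∉ p₂.support :=
    not_mem_support_of_not_reachable p₂ (fun r => hnry r.symm)
  have havoid₁ : ∀ f ∈ p₁.edges, ∀ c : W, f ≠ s(a, c) := by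
    rintro f hf c rfl
    exact hasup₁ (p₁.fst_mem_support_of_mem_edges hf)
  have havoid₂ : ∀ f ∈ p₂.edges, ∀ c : W, f ≠ s(a, c) := by
    rintro f hf c rfl
    exact hasup₂ (p₂.fst_mem_support_of_mem_edges hf)
  -- both reach `a` in T - s(a,t)
  have key : ∀ (z ℓ : W), T.Adj a z → z ≠ t →
      ∀ (p : (T.deleteEdges {s(z, a)}).Walk ℓ z), (∀ f ∈ p.edges, ∀ c : W, f ≠ s(a, c)) →
      (T.deleteEdges {s(a, t)}).Reachable ℓ a := by
    intro z ℓ haz hzt p havoid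
    have h1 : (T.deleteEdges {s(a, t)}).Reachable ℓ z :=
      reachable_delete_of_walk_avoid (T.deleteEdges_le _) p (fun f hf => havoid f hf t)
    refine h1.trans (Adj.reachable ?_)
    rw [SimpleGraph.deleteEdges_adj]
    refine ⟨haz.symm, ?_⟩
    intro hmemEq
    rw [Set.mem_singleton_iff, Sym2.eq_iff] at hmemEq
    rcases hmemEq with ⟨h1', h2'⟩ | ⟨h1', -⟩
    · exact hzt (h1'.trans h2')
    · exact hzt h1'
  refine ⟨ℓ₁, ℓ₂, ?_, hl₁, hl₂, key x ℓ₁ hax hxt p₁ havoid₁, key y ℓ₂ hay hyt p₂ havoid₂⟩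
  -- distinctness
  rintro rfl
  have h2' : (T.deleteEdges {s(x, a)}).Reachable ℓ₁ y := by
    refine reachable_delete_of_walk_avoid (T.deleteEdges_le _) p₂ (fun f hf => ?_)
    intro heq
    exact (havoid₂ f hf x) (heq.trans (Sym2.eq_swap))
  have hya : (T.deleteEdges {s(x, a)}).Adj y a := by
    rw [SimpleGraph.deleteEdges_adj]
    refine ⟨hay.symm, ?_⟩
    intro hmemEq
    rw [Set.mem_singleton_iff, Sym2.eq_iff] at hmemEq
    rcases hmemEq with ⟨rfl, -⟩ | ⟨rfl, rfl⟩
    · exact hxy rfl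
    · exact hay.ne rfl
  have hrℓx : (T.deleteEdges {s(x, a)}).Reachable ℓ₁ x := ⟨p₁⟩
  exact hnrx (hrℓx.symm.trans (h2'.trans hya.reachable))

private lemma even_ncard_aux {α : Type*} (f : α → α) :
    ∀ n (s : Set α), s.Finite → s.ncard = n → (∀ x ∈ s, f x ∈ s) →
      (∀ x ∈ s, f (f x) = x) → (∀ x ∈ s, f x ≠ x) → Even s.ncard := by
  intro n
  induction n using Nat.strong_induction_on with
  | _ n ih =>
    intro s hs hn h1 h2 h3
    rcases s.eq_empty_or_nonempty with rfl | ⟨x, hx⟩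
    · simp
    · have hfx : f x ∈ s := h1 x hx
      have hxfx : x ≠ f x := (h3 x hx).symm
      set s' := s \ {x, f x} with hs'
      have hsub : ({x, f x} : Set α) ⊆ s := by
        rintro z (rfl | rfl)
        · exact hx
        · exact hfx
      have hcard2 : ({x, f x} : Set α).ncard = 2 := Set.ncard_pair hxfx
      have hdiff : s'.ncard = s.ncard - 2 := by
        rw [hs', Set.ncard_diff hsub, hcard2]
      have hle : 2 ≤ s.ncard := by
        have := Set.ncard_le_ncard hsub hs
        omega
      have hlt : s'.ncard < n := by omega
      have hmem : ∀ y ∈ s', y ∈ s ∧ y ≠ x ∧ y ≠ f x := by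
        intro y hy
        refine ⟨hy.1, ?_, ?_⟩
        · intro e; exact hy.2 (by rw [e]; exact Set.mem_insert _ _)
        · intro e; exact hy.2 (by rw [e]; right; rfl)
      have h1' : ∀ y ∈ s', f y ∈ s' := by
        intro y hy
        obtain ⟨hys, hyx, hyfx⟩ := hmem y hy
        refine ⟨h1 y hys, ?_⟩
        rintro (he | he)
        · exact hyfx (by rw [← he, h2 y hys])
        · exact hyx (by
            have := congrArg f he
            rwa [h2 y hys, h2 x hx] at this)
      have hev : Even s'.ncard := ih _ hlt s' hs.diff rfl h1'
        (fun y hy => h2 y (hmem y hy).1) (fun y hy => h3 y (hmem y hy).1)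
      have hfin : s.ncard = s'.ncard + 2 := by omega
      rw [hfin]
      exact hev.add even_two

lemma even_ncard_of_involution {α : Type*} {s : Set α} (hs : s.Finite) (f : α → α)
    (h1 : ∀ x ∈ s, f x ∈ s) (h2 : ∀ x ∈ s, f (f x) = x) (h3 : ∀ x ∈ s, f x ≠ x) :
    Even s.ncard :=
  even_ncard_aux f s.ncard s hs rfl h1 h2 h3

lemma matching_parity {V : Type*} [Finite V] {G : SimpleGraph V} {M : G.Subgraph}
    (hM : M.IsPerfectMatching) (X : Set V) (hX : Odd X.ncard) :
    Odd ((M.edgeSet ∩ cutEdges G X).ncard) := by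
  classical
  have hex : ∀ v : V, ∃! w, M.Adj v w := fun v => hM.1 (hM.2 v)
  set σ : V → V := fun v => (hex v).exists.choose with hσdef
  have hσ : ∀ v, M.Adj v (σ v) := fun v => (hex v).exists.choose_spec
  have huniq : ∀ v w, M.Adj v w → w = σ v := fun v w hw => (hex v).unique hw (hσ v)
  have hσσ : ∀ v, σ (σ v) = v := fun v => (huniq (σ v) v (hσ v).symm).symm
  have hσne : ∀ v, σ v ≠ v := fun v e => ((M.adj_sub (hσ v)).ne' e)
  set S := {x ∈ X | σ x ∉ X} with hS
  have hSsub : S ⊆ X := fun x hx => hx.1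
  have him : M.edgeSet ∩ cutEdges G X = (fun x => s(x, σ x)) '' S := by
    ext e
    constructor
    · rintro ⟨heM, heG, u, w, rfl, hu, hw⟩
      rw [SimpleGraph.Subgraph.mem_edgeSet] at heM
      have hwσ : w = σ u := huniq u w heM
      exact ⟨u, ⟨hu, hwσ ▸ hw⟩, by rw [hwσ]⟩
    · rintro ⟨x, ⟨hx, hσx⟩, rfl⟩
      exact ⟨SimpleGraph.Subgraph.mem_edgeSet.mpr (hσ x),
        (G.mem_edgeSet).mpr (M.adj_sub (hσ x)), x, σ x, rfl, hx, hσx⟩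
  have hinj : Set.InjOn (fun x => s(x, σ x)) S := by
    intro x hx y hy heq
    simp only [Sym2.eq_iff] at heq
    rcases heq with ⟨h1', -⟩ | ⟨h1', h2'⟩
    · exact h1'
    · exact absurd (by rw [h2']; exact hy.1) hx.2
  have hcross : (M.edgeSet ∩ cutEdges G X).ncard = S.ncard := by
    rw [him, Set.ncard_image_of_injOn hinj]
  have hsplit : X.ncard = S.ncard + (X \ S).ncard := by
    rw [← Set.ncard_union_eq Set.disjoint_sdiff_right (Set.toFinite _) (Set.toFinite _),
      Set.union_diff_cancel hSsub]
  have hev : Even (X \ S).ncard := by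
    refine even_ncard_of_involution (Set.toFinite _) σ ?_ ?_ ?_
    · intro x hx
      have hσxX : σ x ∈ X := by
        by_contra hc
        exact hx.2 ⟨hx.1, hc⟩
      refine ⟨hσxX, ?_⟩
      rintro ⟨-, hc⟩
      rw [hσσ x] at hc
      exact hc hx.1
    · intro x _; exact hσσ x
    · intro x _; exact hσne x
  rw [hcross]
  obtain ⟨j, hj⟩ := hX
  obtain ⟨k, hk⟩ := hev
  refine Nat.odd_iff.mpr ?_
  omega

lemma crossing_le_two {V : Type*} [Finite V] {G : SimpleGraph V} {n : ℕ}
    {T : SimpleGraph (Fin n)} {δ : V → Fin n} (hw : decompWidth G T δ = 2)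
    {t₁ t₂ : Fin n} (hadj : T.Adj t₁ t₂) {M : G.Subgraph} (hM : M.IsPerfectMatching) :
    (M.edgeSet ∩ cutEdges G (treeShore T δ t₁ t₂)).ncard ≤ 2 := by
  have hbdd : ∀ (X : Set V), ∀ k ∈ {m | ∃ M : G.Subgraph, M.IsPerfectMatching ∧
      m = (M.edgeSet ∩ cutEdges G X).ncard}, k ≤ Nat.card (Sym2 V) := by
    rintro X k ⟨M', _, rfl⟩
    have h1 := Set.ncard_le_ncard (Set.subset_univ (M'.edgeSet ∩ cutEdges G X)) Set.finite_univ
    rwa [Set.ncard_univ] at h1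
  have h1 : (M.edgeSet ∩ cutEdges G (treeShore T δ t₁ t₂)).ncard ≤
      matchingPorosity G (treeShore T δ t₁ t₂) :=
    le_csSup ⟨Nat.card (Sym2 V), fun k hk => hbdd _ k hk⟩ ⟨M, hM, rfl⟩
  have h2 : matchingPorosity G (treeShore T δ t₁ t₂) ≤ decompWidth G T δ := by
    refine le_csSup ⟨Nat.card (Sym2 V), ?_⟩ ⟨t₁, t₂, hadj, rfl⟩
    rintro k ⟨u₁, u₂, hu, rfl⟩
    exact csSup_le' (fun m hm => hbdd _ m hm)
  rw [hw] at h2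
  omega

lemma no_odd_shore {V : Type*} [Finite V] {G : SimpleGraph V} (hG : IsBrickOrBrace G)
    {n : ℕ} {T : SimpleGraph (Fin n)} {δ : V → Fin n} (hw : decompWidth G T δ = 2)
    {t₁ t₂ : Fin n} (hadj : T.Adj t₁ t₂)
    (h2A : 2 ≤ (treeShore T δ t₁ t₂).ncard) (h2Ac : 2 ≤ (treeShore T δ t₁ t₂)ᶜ.ncard)
    (hodd : Odd (treeShore T δ t₁ t₂).ncard) : False := by
  apply hG.2 (treeShore T δ t₁ t₂)
  refine ⟨fun M hM => ?_, h2A, h2Ac⟩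
  have ho := matching_parity hM _ hodd
  have hle := crossing_le_two hw hadj hM
  obtain ⟨k, hk⟩ := ho
  omega

lemma even_card_of_mc {V : Type*} [Finite V] {G : SimpleGraph V} (hmc : MatchingCovered G)
    (hnt : ∃ u₁ u₂ : V, u₁ ≠ u₂) : Even (Nat.card V) := by
  obtain ⟨u₁, u₂, hne⟩ := hnt
  obtain ⟨p⟩ := hmc.1.preconnected u₁ u₂
  have hedge : ∃ e, e ∈ G.edgeSet := by
    cases p with
    | nil => exact absurd rfl hne
    | cons h q => exact ⟨_, (G.mem_edgeSet).mpr h⟩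
  obtain ⟨e, he⟩ := hedge
  obtain ⟨M, hM, -⟩ := hmc.2 e he
  by_contra hodd
  have h1 := matching_parity hM Set.univ
    (by rw [Set.ncard_univ]; exact Nat.not_even_iff_odd.mp hodd)
  have h2 : cutEdges G (Set.univ : Set V) = ∅ := by
    ext f
    simp [cutEdges]
  rw [h2, Set.inter_empty] at h1
  simp at h1

end Helpers

/-- For a brick or brace of perfect matching width `2` and a PM-decomposition
`(T, δ)` of width `2`, the spine of `T` is cubic. -/
theorem spine_cubic_of_width_two {V : Type*} [Finite V] (G : SimpleGraph V)
    (hG : IsBrickOrBrace G) (hpmw : pmw G = 2)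
    {n : ℕ} (T : SimpleGraph (Fin n)) (δ : V → Fin n)
    (hT : IsPMDecomp G T δ) (hw : decompWidth G T δ = 2) :
    ∀ t, ndeg T t ≠ 1 → spineDeg T t = 1 ∨ spineDeg T t = 3 := by
  classical
  intro t ht
  have hTree := hT.1.1
  have hcub := hT.1.2
  have hdeg3 : ndeg T t = 3 := (hcub t).resolve_left ht
  by_contra hcon
  push_neg at hcon
  obtain ⟨hne1, hne3⟩ := hcon
  have hsd : spineDeg T t = {t' | T.Adj t t' ∧ ndeg T t' ≠ 1}.ncard := rfl
  set SD := {t' | T.Adj t t' ∧ ndeg T t' ≠ 1} with hSD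
  set SL := {t' | T.Adj t t' ∧ ndeg T t' = 1} with hSL
  have hUnion : SD ∪ SL = T.neighborSet t := by
    ext z
    simp only [hSD, hSL, Set.mem_union, Set.mem_setOf_eq, SimpleGraph.mem_neighborSet]
    tauto
  have hDisj : Disjoint SD SL := by
    rw [Set.disjoint_left]
    rintro z ⟨-, hz⟩ ⟨-, hz'⟩
    exact hz hz'
  have hsum : SD.ncard + SL.ncard = 3 := by
    rw [← Set.ncard_union_eq hDisj (Set.toFinite _) (Set.toFinite _), hUnion]
    exact hdeg3
  rw [hsd] at hne1 hne3
  have hcase : SD.ncard = 0 ∨ SD.ncard = 2 := by omega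
  rcases hcase with h0 | h2
  -- Case: spine degree 0 : the tree is a star with three leaves, |V(G)| = 3, contradiction
  · have hSDempty : SD = ∅ := (Set.ncard_eq_zero (Set.toFinite _)).mp h0
    have hallleaf : ∀ z, T.Adj t z → ndeg T z = 1 := by
      intro z hz
      by_contra hzz
      have hmem : z ∈ SD := ⟨hz, hzz⟩
      rw [hSDempty] at hmem
      exact hmem
    have hV : ∀ x : Fin n, x = t ∨ T.Adj t x := by
      intro x
      by_cases hxt : x = t
      · exact Or.inl hxt
      · right
        obtain ⟨p, hp⟩ := (hTree.existsUnique_path t x).exists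
        have hpn : ¬ p.Nil := Walk.not_nil_of_ne (Ne.symm hxt)
        obtain ⟨z, hadj, q, rfl⟩ := Walk.not_nil_iff.mp hpn
        by_cases hqn : q.Nil
        · rw [← hqn.eq]
          exact hadj
        · exfalso
          obtain ⟨y, hadj2, q', rfl⟩ := Walk.not_nil_iff.mp hqn
          have hzleaf : ndeg T z = 1 := hallleaf z hadj
          obtain ⟨w, hwset⟩ := Set.ncard_eq_one.mp hzleaf
          have htw : t ∈ T.neighborSet z := hadj.symm
          have hyw : y ∈ T.neighborSet z := hadj2
          rw [hwset, Set.mem_singleton_iff] at htw hyw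
          have hty : t = y := htw.trans hyw.symm
          have hsup := hp.support_nodup
          rw [Walk.support_cons, List.nodup_cons] at hsup
          apply hsup.1
          rw [Walk.support_cons]
          exact List.mem_cons_of_mem _ (by rw [hty]; exact q'.start_mem_support)
    have hrange : Set.range δ = T.neighborSet t := by
      ext z
      constructor
      · rintro ⟨u, rfl⟩
        rcases hV (δ u) with h | h
        · exfalso
          have hl := hT.2.2.1 u
          rw [h] at hl
          exact absurd (hl.symm.trans hdeg3) (by norm_num)
        · exact h
      · intro hz
        obtain ⟨u, hu⟩ := hT.2.2.2 z (hallleaf z hz)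
        exact ⟨u, hu⟩
    have hcardV : Nat.card V = 3 := by
      have h1 : (Set.univ : Set V).ncard = (Set.range δ).ncard := by
        rw [← Set.image_univ, Set.ncard_image_of_injective _ hT.2.1]
      rw [← Set.ncard_univ, h1, hrange]
      exact hdeg3
    have hnt : ∃ u₁ u₂ : V, u₁ ≠ u₂ := by
      have h1 : 1 < Nat.card V := by omega
      have h2 := (Finite.one_lt_card_iff_nontrivial (α := V)).mp h1
      exact h2.exists_pair_ne
    have hEV := even_card_of_mc hG.1 hnt
    rw [hcardV, Nat.even_iff] at hEV
    omega
  -- Case: spine degree 2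
  · obtain ⟨a, b, hab, hSDab⟩ := Set.ncard_eq_two.mp h2
    have hSL1 : SL.ncard = 1 := by omega
    obtain ⟨l, hSLl⟩ := Set.ncard_eq_one.mp hSL1
    have haSD : a ∈ SD := by rw [hSDab]; exact Set.mem_insert _ _
    have hbSD : b ∈ SD := by rw [hSDab]; right; rfl
    have hlSL : l ∈ SL := by rw [hSLl]; rfl
    obtain ⟨hta, ha1⟩ := haSD
    obtain ⟨htb, hb1⟩ := hbSD
    obtain ⟨htl, hl1⟩ := hlSL
    obtain ⟨v, hv⟩ := hT.2.2.2 l hl1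
    have hnl : T.neighborSet l = {t} := by
      obtain ⟨w, hwset⟩ := Set.ncard_eq_one.mp hl1
      have htmem : t ∈ T.neighborSet l := htl.symm
      rw [hwset, Set.mem_singleton_iff] at htmem
      rw [hwset, htmem]
    have hbr : ∀ z : Fin n, T.Adj t z → ¬ (T.deleteEdges {s(z, t)}).Reachable z t :=
      fun z hz => tree_not_reachable_delete hTree.IsAcyclic hz.symm
    have hvnot : ∀ z : Fin n, T.Adj t z → ndeg T z ≠ 1 →
        ¬ (T.deleteEdges {s(z, t)}).Reachable l z := by
      intro z hz hz1 hr
      obtain ⟨p⟩ := hr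
      have hlz : l ≠ z := fun e => hz1 (e ▸ hl1)
      have hpn : ¬ p.Nil := Walk.not_nil_of_ne hlz
      obtain ⟨y, hadj, q, rfl⟩ := Walk.not_nil_iff.mp hpn
      have hyl : y ∈ T.neighborSet l := T.deleteEdges_le _ hadj
      rw [hnl, Set.mem_singleton_iff] at hyl
      subst hyl
      exact hbr z hz (Reachable.symm ⟨q⟩)
    -- coverage
    have hcover : ∀ u : V, (T.deleteEdges {s(a, t)}).Reachable (δ u) a ∨
        (T.deleteEdges {s(b, t)}).Reachable (δ u) b ∨ u = v := by
      intro u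
      have hut : δ u ≠ t := by
        intro e
        have hl := hT.2.2.1 u
        rw [e] at hl
        exact absurd (hl.symm.trans hdeg3) (by norm_num)
      obtain ⟨p, hp⟩ := (hTree.existsUnique_path t (δ u)).exists
      have hpn : ¬ p.Nil := Walk.not_nil_of_ne (Ne.symm hut)
      obtain ⟨z, hadj, q, rfl⟩ := Walk.not_nil_iff.mp hpn
      have htq : t ∉ q.support := by
        have hsup := hp.support_nodup
        rw [Walk.support_cons, List.nodup_cons] at hsup
        exact hsup.1
      have hreach : (T.deleteEdges {s(z, t)}).Reachable (δ u) z := by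
        refine Reachable.symm (reachable_delete_of_walk_avoid le_rfl q ?_)
        intro f hf heq
        subst heq
        exact htq (q.snd_mem_support_of_mem_edges hf)
      have hzN : z ∈ SD ∪ SL := by
        rw [hUnion]
        exact hadj
      rcases hzN with hz | hz
      · rw [hSDab] at hz
        simp only [Set.mem_insert_iff, Set.mem_singleton_iff] at hz
        rcases hz with rfl | rfl
        · exact Or.inl hreach
        · exact Or.inr (Or.inl hreach)
      · rw [hSLl, Set.mem_singleton_iff] at hz
        subst hz
        by_cases hqn : q.Nil
        · refine Or.inr (Or.inr (hT.2.1 ?_))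
          rw [hv, ← hqn.eq]
        · exfalso
          obtain ⟨y, hadj2, q', rfl⟩ := Walk.not_nil_iff.mp hqn
          have hyl : y ∈ T.neighborSet z := hadj2
          rw [hnl, Set.mem_singleton_iff] at hyl
          apply htq
          rw [Walk.support_cons]
          exact List.mem_cons_of_mem _ (by rw [← hyl]; exact q'.start_mem_support)
    -- disjointness of the two shores
    have hAB : ∀ u : V, (T.deleteEdges {s(a, t)}).Reachable (δ u) a →
        (T.deleteEdges {s(b, t)}).Reachable (δ u) b → False := by
      intro u huA huB
      obtain ⟨p⟩ := huA
      have htp : t ∉ p.support :=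
        not_mem_support_of_not_reachable p (fun hr => hbr a hta hr.symm)
      have hreach2 : (T.deleteEdges {s(b, t)}).Reachable (δ u) a := by
        refine reachable_delete_of_walk_avoid (T.deleteEdges_le _) p ?_
        intro f hf heq
        subst heq
        exact htp (p.snd_mem_support_of_mem_edges hf)
      have hadjAB : (T.deleteEdges {s(b, t)}).Adj a t := by
        rw [SimpleGraph.deleteEdges_adj]
        refine ⟨hta.symm, ?_⟩
        intro hmem
        rw [Set.mem_singleton_iff, Sym2.eq_iff] at hmem
        rcases hmem with ⟨h1', -⟩ | ⟨h1', -⟩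
        · exact hab h1'
        · exact hta.ne h1'.symm
      exact hbr b htb ((huB.symm.trans hreach2).trans hadjAB.reachable)
    set A := treeShore T δ a t with hA
    set B := treeShore T δ b t with hB
    have hmemA : ∀ u : V, u ∈ A ↔ (T.deleteEdges {s(a, t)}).Reachable (δ u) a := fun u => Iff.rfl
    have hmemB : ∀ u : V, u ∈ B ↔ (T.deleteEdges {s(b, t)}).Reachable (δ u) b := fun u => Iff.rfl
    have hvA : v ∉ A := by
      intro h
      have h' := (hmemA v).mp h
      rw [hv] at h'
      exact hvnot a hta ha1 h'
    have hvB : v ∉ B := by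
      intro h
      have h' := (hmemB v).mp h
      rw [hv] at h'
      exact hvnot b htb hb1 h'
    -- two elements in each shore
    obtain ⟨ℓ₁, ℓ₂, h12, hle₁, hle₂, hre₁, hre₂⟩ :=
      exists_two_leaves_side hTree hcub hta.symm ha1
    obtain ⟨u₁, hu₁⟩ := hT.2.2.2 ℓ₁ hle₁
    obtain ⟨u₂, hu₂⟩ := hT.2.2.2 ℓ₂ hle₂
    have hu₁A : u₁ ∈ A := (hmemA u₁).mpr (by rw [hu₁]; exact hre₁)
    have hu₂A : u₂ ∈ A := (hmemA u₂).mpr (by rw [hu₂]; exact hre₂)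
    obtain ⟨ℓ₃, ℓ₄, h34, hle₃, hle₄, hre₃, hre₄⟩ :=
      exists_two_leaves_side hTree hcub htb.symm hb1
    obtain ⟨u₃, hu₃⟩ := hT.2.2.2 ℓ₃ hle₃
    obtain ⟨u₄, hu₄⟩ := hT.2.2.2 ℓ₄ hle₄
    have hu₃B : u₃ ∈ B := (hmemB u₃).mpr (by rw [hu₃]; exact hre₃)
    have hu₄B : u₄ ∈ B := (hmemB u₄).mpr (by rw [hu₄]; exact hre₄)
    have hAcard : 2 ≤ A.ncard :=
      (Set.one_lt_ncard (Set.toFinite _)).mpr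
        ⟨u₁, hu₁A, u₂, hu₂A, fun e => h12 (by rw [← hu₁, ← hu₂, e])⟩
    have hBcard : 2 ≤ B.ncard :=
      (Set.one_lt_ncard (Set.toFinite _)).mpr
        ⟨u₃, hu₃B, u₄, hu₄B, fun e => h34 (by rw [← hu₃, ← hu₄, e])⟩
    have hu₃nA : u₃ ∉ A := fun h => hAB u₃ ((hmemA u₃).mp h) ((hmemB u₃).mp hu₃B)
    have hu₁nB : u₁ ∉ B := fun h => hAB u₁ ((hmemA u₁).mp hu₁A) ((hmemB u₁).mp h)
    have hAc : 2 ≤ Aᶜ.ncard :=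
      (Set.one_lt_ncard (Set.toFinite _)).mpr
        ⟨v, hvA, u₃, hu₃nA, fun e => hvB (e ▸ hu₃B)⟩
    have hBc : 2 ≤ Bᶜ.ncard :=
      (Set.one_lt_ncard (Set.toFinite _)).mpr
        ⟨v, hvB, u₁, hu₁nB, fun e => hvA (e ▸ hu₁A)⟩
    -- cardinality count
    have hdisjAB : Disjoint A B := Set.disjoint_left.mpr
      (fun u hu hu' => (hAB u ((hmemA u).mp hu) ((hmemB u).mp hu')).elim)
    have hdisj2 : Disjoint (A ∪ B) ({v} : Set V) := by
      rw [Set.disjoint_right]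
      intro x hx
      rw [Set.mem_singleton_iff] at hx
      subst hx
      rintro (h | h)
      · exact hvA h
      · exact hvB h
    have hpart : (Set.univ : Set V) = (A ∪ B) ∪ {v} := by
      ext u
      simp only [Set.mem_univ, true_iff, Set.mem_union, Set.mem_singleton_iff]
      rcases hcover u with h | h | h
      · exact Or.inl (Or.inl ((hmemA u).mpr h))
      · exact Or.inl (Or.inr ((hmemB u).mpr h))
      · exact Or.inr h
    have hcardsum : Nat.card V = A.ncard + B.ncard + 1 := by
      rw [← Set.ncard_univ, hpart, Set.ncard_union_eq hdisj2 (Set.toFinite _) (Set.toFinite _),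
        Set.ncard_union_eq hdisjAB (Set.toFinite _) (Set.toFinite _), Set.ncard_singleton]
    have hEV : Even (Nat.card V) := even_card_of_mc hG.1 ⟨v, u₁, fun e => hvA (e ▸ hu₁A)⟩
    have hoddAB : Odd A.ncard ∨ Odd B.ncard := by
      rcases Nat.even_or_odd A.ncard with hA' | hA'
      · rcases Nat.even_or_odd B.ncard with hB' | hB'
        · exfalso
          obtain ⟨i, hi⟩ := hA'
          obtain ⟨j, hj⟩ := hB'
          obtain ⟨k, hk⟩ := hEV
          omega
        · exact Or.inr hB'
      · exact Or.inl hA'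
    rcases hoddAB with ho | ho
    · exact no_odd_shore hG hw hta.symm hAcard hAc ho
    · exact no_odd_shore hG hw htb.symm hBcard hBc ho
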